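/- arXiv:2012.14343 — 4 statements merged into one kernel-verified Lean document; each statement's English description precedes it below -/
import Mathlib

section
/- Let v be a subharmonic function on the unit disc 𝔻, let x ∈ ℂ with |x| ≤ 1/8, and let A_x = {ζ ∈ ℂ : 1/4 ≤ |ζ - x| ≤ 1/2}. Then (3/32) v(x) ≤ (1/(2π)) ∫_{A_x} |v| dλ. -/
open MeasureTheory Metric Complex Filter Topology
open Real Set
open scoped Real Topology ENNReal

theorem lintegral_comp_polarCoord_symm' (g : ℝ × ℝ → ℝ≥0∞) :
    (∫⁻ p in polarCoord.target, ENNReal.ofReal p.1 * g (polarCoord.symm p)) = ∫⁻ p, g p := by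
  set B : ℝ × ℝ → ℝ × ℝ →L[ℝ] ℝ × ℝ := fun p =>
    LinearMap.toContinuousLinearMap (Matrix.toLin (Module.Basis.finTwoProd ℝ) (Module.Basis.finTwoProd ℝ)
      !![Real.cos p.2, -p.1 * Real.sin p.2; Real.sin p.2, p.1 * Real.cos p.2])
  have A : ∀ p ∈ polarCoord.target, HasFDerivWithinAt polarCoord.symm (B p) polarCoord.target p :=
    fun p _ => (hasFDerivAt_polarCoord_symm p).hasFDerivWithinAt
  have B_det : ∀ p, (B p).det = p.1 := by
    intro p
    conv_rhs => rw [← one_mul p.1, ← Real.cos_sq_add_sin_sq p.2]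
    simp only [B, neg_mul, LinearMap.det_toContinuousLinearMap, LinearMap.det_toLin,
      Matrix.det_fin_two_of, sub_neg_eq_add]
    ring
  symm
  calc
    ∫⁻ p, g p = ∫⁻ p in polarCoord.source, g p := by
      rw [← setLIntegral_univ]
      exact setLIntegral_congr polarCoord_source_ae_eq_univ.symm
    _ = ∫⁻ p in polarCoord.symm '' polarCoord.target, g p := by
      rw [polarCoord.symm_image_target_eq_source]
    _ = ∫⁻ p in polarCoord.target, ENNReal.ofReal |(B p).det| * g (polarCoord.symm p) :=
      lintegral_image_eq_lintegral_abs_det_fderiv_mul volume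
        polarCoord.open_target.measurableSet A polarCoord.symm.injOn g
    _ = ∫⁻ p in polarCoord.target, ENNReal.ofReal p.1 * g (polarCoord.symm p) := by
      refine setLIntegral_congr_fun_ae polarCoord.open_target.measurableSet
        (Filter.Eventually.of_forall fun p hp => ?_)
      rw [B_det, abs_of_pos hp.1]

theorem Complex.lintegral_comp_polarCoord_symm' (g : ℂ → ℝ≥0∞) :
    (∫⁻ p in polarCoord.target, ENNReal.ofReal p.1 * g (Complex.polarCoord.symm p)) = ∫⁻ z, g z := by
  rw [← (Complex.volume_preserving_equiv_real_prod.symm).lintegral_comp_emb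
    Complex.measurableEquivRealProd.symm.measurableEmbedding,
    ← _root_.lintegral_comp_polarCoord_symm' (fun p => g (Complex.measurableEquivRealProd.symm p))]
  rfl

lemma exists_bound_of_usc {v : ℂ → ℝ} {U : Set ℂ} (hU : IsOpen U)
    (hv : UpperSemicontinuousOn v U) {K : Set ℂ} (hK : IsCompact K) (hKU : K ⊆ U)
    (hne : K.Nonempty) : ∃ M : ℝ, ∀ z ∈ K, v z ≤ M := by
  have husc : ∀ z (_ : z ∈ K), {ζ | v ζ < v z + 1} ∈ 𝓝 z := by
    intro z hz
    have h2 := hv z (hKU hz) (v z + 1) (by linarith)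
    rwa [nhdsWithin_eq_nhds.2 (hU.mem_nhds (hKU hz))] at h2
  obtain ⟨t, ht⟩ := hK.elim_nhds_subcover' (fun z _ => {ζ | v ζ < v z + 1}) husc
  rcases t.eq_empty_or_nonempty with rfl | htne
  · obtain ⟨z, hz⟩ := hne
    simpa using ht hz
  · refine ⟨t.sup' htne (fun z => v ↑z + 1), fun ζ hζ => ?_⟩
    have := ht hζ
    simp only [Set.mem_iUnion, Set.mem_setOf_eq] at this
    obtain ⟨z, hzt, hzζ⟩ := this
    exact le_trans (le_of_lt hzζ) (Finset.le_sup' (f := fun z : K => v ↑z + 1) hzt)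

/-- A real-valued function is subharmonic on a set if it is upper semicontinuous there
and satisfies the sub-mean value inequality on every closed disc contained in the set. -/
def SubharmonicOn (v : ℂ → ℝ) (U : Set ℂ) : Prop :=
  UpperSemicontinuousOn v U ∧
  ∀ z r, 0 < r → Metric.closedBall z r ⊆ U →
    v z ≤ (2 * Real.pi)⁻¹ * ∫ θ in (0:ℝ)..(2 * Real.pi), v (z + r * Complex.exp (θ * Complex.I))

/-- If v is subharmonic on the unit disc and |x| ≤ 1/8,
then (3/32) v(x) ≤ (1/(2π)) ∫_{A_x} |v| dλ where A_x = {1/4 ≤ |ζ-x| ≤ 1/2}. -/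
theorem subharmonic_annulus_bound' (v : ℂ → ℝ) (hv : SubharmonicOn v (ball 0 1))
    (x : ℂ) (hx : ‖x‖ ≤ 1/8) :
    (3/32) * v x ≤ (2 * Real.pi)⁻¹ *
      ∫ ζ in {ζ : ℂ | 1/4 ≤ ‖ζ - x‖ ∧ ‖ζ - x‖ ≤ 1/2}, |v ζ| := by
  classical
  have hπ : (0:ℝ) < π := Real.pi_pos
  set A : Set ℂ := {ζ : ℂ | 1/4 ≤ ‖ζ - x‖ ∧ ‖ζ - x‖ ≤ 1/2} with hAdef
  by_cases hpos : 0 < v x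
  swap
  · have h1 : (3/32) * v x ≤ 0 := by nlinarith [not_lt.1 hpos]
    have h2 : (0:ℝ) ≤ (2 * Real.pi)⁻¹ * ∫ ζ in A, |v ζ| :=
      mul_nonneg (by positivity) (integral_nonneg fun ζ => abs_nonneg _)
    exact h1.trans h2
  -- basic geometry
  have hAsub : A ⊆ ball (0:ℂ) 1 := by
    rintro ζ ⟨h1, h2⟩
    rw [mem_ball, Complex.dist_eq, sub_zero]
    calc ‖ζ‖ = ‖ζ - x + x‖ := by ring_nf
    _ ≤ ‖ζ - x‖ + ‖x‖ := norm_add_le _ _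
    _ < 1 := by linarith
  have hAclosed : IsClosed A := by
    have hc : Continuous fun ζ : ℂ => ‖ζ - x‖ :=
      continuous_norm.comp (continuous_id.sub continuous_const)
    exact (isClosed_le continuous_const hc).inter (isClosed_le hc continuous_const)
  have hAmeas : MeasurableSet A := hAclosed.measurableSet
  have hK : closedBall x (1/2 : ℝ) ⊆ ball (0:ℂ) 1 := by
    intro ζ hζ
    rw [mem_closedBall, Complex.dist_eq] at hζ
    rw [mem_ball, Complex.dist_eq, sub_zero]
    calc ‖ζ‖ = ‖ζ - x + x‖ := by ring_nf
    _ ≤ ‖ζ - x‖ + ‖x‖ := norm_add_le _ _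
    _ < 1 := by linarith
  -- bound M
  obtain ⟨M₀, hM₀⟩ := exists_bound_of_usc isOpen_ball hv.1 (isCompact_closedBall x (1/2))
    hK ⟨x, mem_closedBall_self (by norm_num)⟩
  set M : ℝ := max M₀ 0 with hMdef
  have hM0 : (0:ℝ) ≤ M := le_max_right _ _
  have hMle : ∀ ζ ∈ closedBall x (1/2 : ℝ), v ζ ≤ M := fun ζ hζ =>
    (hM₀ ζ hζ).trans (le_max_left _ _)
  -- the measurable modification w
  have hball : ∀ ζ : ℂ, ζ ∈ ball (0:ℂ) 1 ↔ ‖ζ‖ < 1 := fun ζ => by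
    rw [mem_ball, Complex.dist_eq, sub_zero]
  set w : ℂ → ℝ := fun ζ => if ‖ζ‖ < 1 then v ζ else 0 with hwdef
  have hw : ∀ ζ ∈ ball (0:ℂ) 1, w ζ = v ζ := fun ζ h => if_pos ((hball ζ).1 h)
  have hopen : ∀ c : ℝ, IsOpen {ζ : ℂ | ζ ∈ ball (0:ℂ) 1 ∧ v ζ < c} := by
    intro c
    rw [isOpen_iff_mem_nhds]
    rintro z ⟨hzb, hzc⟩
    have h2 := hv.1 z hzb c hzc
    rw [nhdsWithin_eq_nhds.2 (isOpen_ball.mem_nhds hzb)] at h2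
    exact Filter.inter_mem (isOpen_ball.mem_nhds hzb) h2
  have hwmeas : Measurable w := by
    apply measurable_of_Iio
    intro c
    have hset : w ⁻¹' Iio c = {ζ : ℂ | ζ ∈ ball (0:ℂ) 1 ∧ v ζ < c} ∪
        (if (0:ℝ) < c then (ball (0:ℂ) 1)ᶜ else ∅) := by
      ext ζ
      by_cases hb : ‖ζ‖ < 1 <;> by_cases h0 : (0:ℝ) < c <;>
        simp [hwdef, hb, h0, hball, mem_preimage, mem_Iio]
    rw [hset]
    refine ((hopen c).measurableSet).union ?_
    split_ifs
    exacts [measurableSet_ball.compl, MeasurableSet.empty]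
  -- circle bounds
  set Φ : ℝ → ℝ≥0∞ := fun r =>
    ∫⁻ θ in Ioo (-π) π, ENNReal.ofReal |w (x + r * Complex.exp (θ * Complex.I))| with hΦdef
  have key : ∀ r ∈ Icc (1/4:ℝ) (1/2),
      ENNReal.ofReal (2*π*v x) ≤ Φ r ∧ Φ r ≤ ENNReal.ofReal (4*π*M) := by
    rintro r ⟨hr1, hr2⟩
    have hr0 : (0:ℝ) < r := lt_of_lt_of_le (by norm_num) hr1
    have hsub : closedBall x r ⊆ ball (0:ℂ) 1 :=
      (closedBall_subset_closedBall hr2).trans hK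
    have hmean := hv.2 x r hr0 hsub
    set f : ℝ → ℝ := fun θ => v (x + r * Complex.exp (θ * Complex.I)) with hfdef
    have hmem : ∀ θ : ℝ, x + (r:ℂ) * Complex.exp (θ * Complex.I) ∈ closedBall x (1/2:ℝ) := by
      intro θ
      rw [mem_closedBall, Complex.dist_eq, add_sub_cancel_left, norm_mul, Complex.norm_real,
        Complex.norm_exp_ofReal_mul_I, mul_one, Real.norm_eq_abs, abs_of_pos hr0]
      exact hr2
    have hub : ∀ θ : ℝ, f θ ≤ M := fun θ => hMle _ (hmem θ)
    have hInt : IntervalIntegrable f volume 0 (2*π) := by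
      by_contra hc
      rw [intervalIntegral.integral_undef hc, mul_zero] at hmean
      linarith
    have hper : Function.Periodic f (2*π) := by
      intro θ
      have hexp : Complex.exp (((θ + 2*π : ℝ) : ℂ) * Complex.I) =
          Complex.exp ((θ:ℂ) * Complex.I) := by
        push_cast
        rw [add_mul, Complex.exp_add, Complex.exp_two_pi_mul_I, mul_one]
      simp only [hfdef, hexp]
    have hIntpi : IntervalIntegrable f volume (-π) π := by
      have h1 : IntervalIntegrable f volume 0 π := hInt.mono_set (by
        rw [Set.uIcc_of_le (by linarith), Set.uIcc_of_le (by linarith)]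
        exact Set.Icc_subset_Icc le_rfl (by linarith))
      have h3 : IntervalIntegrable f volume π (2*π) := hInt.mono_set (by
        rw [Set.uIcc_of_le (by linarith), Set.uIcc_of_le (by linarith)]
        exact Set.Icc_subset_Icc (by linarith) le_rfl)
      have h4 := h3.comp_add_right (2*π)
      have h5 : (fun θ => f (θ + 2*π)) = f := funext fun θ => hper θ
      rw [h5, show π - 2*π = -π by ring, show 2*π - 2*π = 0 by ring] at h4
      exact h4.trans h1
    have hIeq : (∫ θ in (-π)..π, f θ) = ∫ θ in (0:ℝ)..(2*π), f θ := by
      have h := hper.intervalIntegral_add_eq (-π) 0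
      rwa [show -π + 2*π = π by ring, zero_add] at h
    have hlow : 2*π*v x ≤ ∫ θ in (-π)..π, f θ := by
      rw [hIeq]
      rw [inv_mul_eq_div, le_div_iff₀ (by positivity)] at hmean
      linarith
    have habs2 : (∫ θ in (-π)..π, f θ) ≤ ∫ θ in (-π)..π, |f θ| :=
      intervalIntegral.integral_mono_on (by linarith) hIntpi hIntpi.abs
        (fun θ _ => le_abs_self _)
    have habs : (∫ θ in (-π)..π, |f θ|) ≤ 4*π*M := by
      have hptw : ∀ θ ∈ Set.Icc (-π) π, |f θ| ≤ 2*M - f θ := by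
        intro θ _
        rcases le_or_gt 0 (f θ) with h | h
        · rw [_root_.abs_of_nonneg h]; linarith [hub θ]
        · rw [_root_.abs_of_neg h]; linarith
      have hmono := intervalIntegral.integral_mono_on (by linarith : (-π:ℝ) ≤ π) hIntpi.abs
        (intervalIntegrable_const.sub hIntpi) hptw
      have hconst : (∫ θ in (-π)..π, (2*M - f θ)) = 2*M*(2*π) - ∫ θ in (-π)..π, f θ := by
        rw [intervalIntegral.integral_sub intervalIntegrable_const hIntpi,
          intervalIntegral.integral_const, smul_eq_mul]
        ring
      rw [hconst] at hmono
      have := mul_pos (mul_pos (by norm_num : (0:ℝ) < 2) hπ) hpos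
      linarith
    have hin : ∀ θ:ℝ, x + (r:ℂ) * Complex.exp (θ * Complex.I) ∈ ball (0:ℂ) 1 :=
      fun θ => hK (hmem θ)
    have hfw : ∀ θ:ℝ, |w (x + (r:ℂ) * Complex.exp (θ * Complex.I))| = |f θ| := fun θ => by
      rw [hw _ (hin θ)]
    have hIntOn : IntegrableOn (fun θ => |f θ|) (Ioo (-π) π) volume := by
      have h := hIntpi.abs
      rwa [intervalIntegrable_iff_integrableOn_Ioo_of_le (by linarith)] at h
    have hΦr : Φ r = ENNReal.ofReal (∫ θ in Ioo (-π) π, |f θ|) := by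
      rw [MeasureTheory.ofReal_integral_eq_lintegral_ofReal hIntOn
        (Filter.Eventually.of_forall fun θ => abs_nonneg _)]
      exact lintegral_congr fun θ => by rw [hfw θ]
    have hIoo : (∫ θ in Ioo (-π) π, |f θ|) = ∫ θ in (-π)..π, |f θ| := by
      rw [intervalIntegral.integral_of_le (by linarith),
        MeasureTheory.integral_Ioc_eq_integral_Ioo]
    constructor
    · rw [hΦr, hIoo]
      exact ENNReal.ofReal_le_ofReal (le_trans hlow habs2)
    · rw [hΦr, hIoo]
      exact ENNReal.ofReal_le_ofReal habs
  -- abs of the circle point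
  have habs_arg : ∀ r θ : ℝ, 0 < r →
      ‖(x + (r:ℂ) * Complex.exp (θ * Complex.I)) - x‖ = r := by
    intro r θ hr0
    rw [add_sub_cancel_left, norm_mul, Complex.norm_real, Complex.norm_exp_ofReal_mul_I,
      mul_one, Real.norm_eq_abs, abs_of_pos hr0]
  -- L and polar coordinates
  set L : ℝ≥0∞ := ∫⁻ ζ in A, ENNReal.ofReal |v ζ| with hLdef
  set g : ℂ → ℝ≥0∞ := A.indicator (fun ζ => ENNReal.ofReal |w ζ|) with hgdef
  have hgmeas : Measurable g :=
    (ENNReal.measurable_ofReal.comp hwmeas.abs).indicator hAmeas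
  have hL1 : L = ∫⁻ ζ, g ζ := by
    rw [hgdef, lintegral_indicator hAmeas]
    exact (setLIntegral_congr_fun_ae hAmeas
      (Filter.Eventually.of_forall fun ζ hζ => by rw [hw ζ (hAsub hζ)])).symm
  have htr : (∫⁻ ζ, g ζ) = ∫⁻ ζ, g (x + ζ) :=
    ((measurePreserving_add_left volume x).lintegral_comp hgmeas).symm
  have hpol : (∫⁻ ζ, g (x + ζ)) =
      ∫⁻ p in _root_.polarCoord.target, ENNReal.ofReal p.1 * g (x + Complex.polarCoord.symm p) :=
    (Complex.lintegral_comp_polarCoord_symm' (fun ζ => g (x + ζ))).symm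
  have hsymm_exp : ∀ r θ : ℝ,
      (Complex.polarCoord.symm (r, θ)) = (r:ℂ) * Complex.exp (θ * Complex.I) := by
    intro r θ
    rw [Complex.polarCoord_symm_apply, Complex.exp_mul_I]
    push_cast
    ring
  have hcont : Measurable fun p : ℝ × ℝ => Complex.polarCoord.symm p := by
    have heq : (fun p : ℝ × ℝ => Complex.polarCoord.symm p) =
        fun p : ℝ × ℝ => (p.1:ℂ) * Complex.exp (p.2 * Complex.I) :=
      funext fun p => hsymm_exp p.1 p.2
    rw [heq]
    fun_prop
  have hF : Measurable fun p : ℝ × ℝ =>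
      ENNReal.ofReal p.1 * g (x + Complex.polarCoord.symm p) :=
    (ENNReal.measurable_ofReal.comp measurable_fst).mul
      (hgmeas.comp (measurable_const.add hcont))
  have hTon : (∫⁻ p in _root_.polarCoord.target,
        ENNReal.ofReal p.1 * g (x + Complex.polarCoord.symm p))
      = ∫⁻ r in Ioi (0:ℝ), ∫⁻ θ in Ioo (-π) π,
          ENNReal.ofReal r * g (x + Complex.polarCoord.symm (r, θ)) := by
    rw [polarCoord_target, Measure.volume_eq_prod, ← Measure.prod_restrict,
      MeasureTheory.lintegral_prod _ hF.aemeasurable]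
  have hslice : ∀ r ∈ Ioi (0:ℝ),
      (∫⁻ θ in Ioo (-π) π, ENNReal.ofReal r * g (x + Complex.polarCoord.symm (r, θ)))
        = (Icc (1/4:ℝ) (1/2)).indicator (fun r => ENNReal.ofReal r * Φ r) r := by
    intro r hr
    have hr0 : (0:ℝ) < r := hr
    by_cases hrIcc : r ∈ Icc (1/4:ℝ) (1/2)
    · rw [Set.indicator_of_mem hrIcc]
      have hgval : ∀ θ : ℝ, g (x + Complex.polarCoord.symm (r, θ))
          = ENNReal.ofReal |w (x + (r:ℂ) * Complex.exp (θ * Complex.I))| := by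
        intro θ
        rw [hsymm_exp]
        refine Set.indicator_of_mem ?_ _
        simp only [hAdef, Set.mem_setOf_eq, habs_arg r θ hr0]
        exact ⟨hrIcc.1, hrIcc.2⟩
      calc (∫⁻ θ in Ioo (-π) π, ENNReal.ofReal r * g (x + Complex.polarCoord.symm (r, θ)))
          = ∫⁻ θ in Ioo (-π) π,
            ENNReal.ofReal r * ENNReal.ofReal |w (x + (r:ℂ) * Complex.exp (θ * Complex.I))| :=
          lintegral_congr fun θ => by rw [hgval θ]
      _ = ENNReal.ofReal r * Φ r := lintegral_const_mul' _ _ ENNReal.ofReal_ne_top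
    · rw [Set.indicator_of_notMem hrIcc]
      have hgval : ∀ θ : ℝ, g (x + Complex.polarCoord.symm (r, θ)) = 0 := by
        intro θ
        rw [hsymm_exp]
        refine Set.indicator_of_notMem ?_ _
        intro hmem'
        apply hrIcc
        simp only [hAdef, Set.mem_setOf_eq, habs_arg r θ hr0] at hmem'
        exact ⟨hmem'.1, hmem'.2⟩
      calc (∫⁻ θ in Ioo (-π) π, ENNReal.ofReal r * g (x + Complex.polarCoord.symm (r, θ)))
          = ∫⁻ _ in Ioo (-π) π, (0:ℝ≥0∞) :=
          lintegral_congr fun θ => by rw [hgval θ, mul_zero]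
      _ = 0 := lintegral_zero
  have hsub0 : Icc (1/4:ℝ) (1/2) ⊆ Ioi (0:ℝ) := fun r hr => lt_of_lt_of_le (by norm_num) hr.1
  have hLpolar : L = ∫⁻ r in Icc (1/4:ℝ) (1/2), ENNReal.ofReal r * Φ r := by
    rw [hL1, htr, hpol, hTon,
      setLIntegral_congr_fun_ae measurableSet_Ioi (Filter.Eventually.of_forall hslice),
      lintegral_indicator measurableSet_Icc,
      Measure.restrict_restrict measurableSet_Icc,
      Set.inter_eq_self_of_subset_left hsub0]
  have h2π : (0:ℝ) < 2*π := by positivity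
  have hvx : (0:ℝ) ≤ 2*π*v x := (mul_pos h2π hpos).le
  have hLne : L ≠ ⊤ := by
    rw [hLpolar]
    have hb : (∫⁻ r in Icc (1/4:ℝ) (1/2), ENNReal.ofReal r * Φ r)
        ≤ ∫⁻ _ in Icc (1/4:ℝ) (1/2), ENNReal.ofReal (1/2) * ENNReal.ofReal (4*π*M) := by
      apply lintegral_mono_ae
      filter_upwards [ae_restrict_mem measurableSet_Icc] with r hr
      exact mul_le_mul' (ENNReal.ofReal_le_ofReal hr.2) (key r hr).2
    refine ne_top_of_le_ne_top ?_ hb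
    rw [setLIntegral_const]
    exact ENNReal.mul_ne_top
      (ENNReal.mul_ne_top ENNReal.ofReal_ne_top ENNReal.ofReal_ne_top)
      (by simp [Real.volume_Icc])
  have hRint : (∫⁻ r in Icc (1/4:ℝ) (1/2), ENNReal.ofReal r) = ENNReal.ofReal (3/32) := by
    have hInt_id : IntegrableOn (fun r : ℝ => r) (Icc (1/4:ℝ) (1/2)) volume :=
      continuous_id.integrableOn_Icc
    rw [← MeasureTheory.ofReal_integral_eq_lintegral_ofReal hInt_id
      (by filter_upwards [ae_restrict_mem measurableSet_Icc] with r hr; exact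
        (by linarith [hr.1] : (0:ℝ) ≤ r))]
    congr 1
    rw [MeasureTheory.integral_Icc_eq_integral_Ioc,
      ← intervalIntegral.integral_of_le (by norm_num : (1/4:ℝ) ≤ 1/2)]
    rw [integral_id]
    norm_num
  have hLlb : ENNReal.ofReal (2*π*v x) * ENNReal.ofReal (3/32) ≤ L := by
    rw [hLpolar, ← hRint, ← lintegral_const_mul' _ _ ENNReal.ofReal_ne_top]
    apply lintegral_mono_ae
    filter_upwards [ae_restrict_mem measurableSet_Icc] with r hr
    rw [mul_comm (ENNReal.ofReal (2*π*v x))]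
    exact mul_le_mul' le_rfl (key r hr).1
  have hintAv : (∫ ζ in A, |v ζ|) = L.toReal := by
    rw [hLdef]
    rw [MeasureTheory.integral_eq_lintegral_of_nonneg_ae
      (Filter.Eventually.of_forall fun ζ => abs_nonneg _)
      (by
        refine (hwmeas.abs.aestronglyMeasurable).congr ?_
        filter_upwards [ae_restrict_mem hAmeas] with ζ hζ
        rw [hw ζ (hAsub hζ)])]
  have hfin : 2*π*v x * (3/32) ≤ L.toReal := by
    have hle : ENNReal.ofReal (2*π*v x * (3/32)) ≤ L := by
      rw [ENNReal.ofReal_mul hvx]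
      exact hLlb
    have h := ENNReal.toReal_mono hLne hle
    rwa [ENNReal.toReal_ofReal (by nlinarith : (0:ℝ) ≤ 2*π*v x * (3/32))] at h
  calc (3/32) * v x = (2*π)⁻¹ * (2*π*v x * (3/32)) := by
        field_simp
  _ ≤ (2*π)⁻¹ * L.toReal := mul_le_mul_of_nonneg_left hfin (by positivity)
  _ = (2 * Real.pi)⁻¹ * ∫ ζ in A, |v ζ| := by rw [hintAv]
end

section
/- Let Y be a one-dimensional complex manifold with a Hermitian form ω, and for each p ≥ 1 let Q_p : Y → [0, +∞] be a measurable function with ∫_Y Q_p ω ≤ c·p for a constant c > 0. Assume every x ∈ Y has a neighborhood U_x with ∫_{U_x} ω < +∞ on which Q_p ≥ ε_x > 0 holds ω-a.e. for all sufficiently large p. Then (1/p) log Q_p → 0 in L¹_loc(Y, ω) as p → +∞. -/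
open MeasureTheory Metric Complex Filter Topology

lemma abs_log_le_aux {ε t P : ℝ} (hε : 0 < ε) (ht : ε ≤ t) (hP : 1 ≤ P) :
    |Real.log t| ≤ |Real.log ε| + Real.log P + t / P := by
  have ht0 : 0 < t := hε.trans_le ht
  have hP0 : 0 < P := lt_of_lt_of_le one_pos hP
  have hlogP : 0 ≤ Real.log P := Real.log_nonneg hP
  have htP : 0 ≤ t / P := div_nonneg ht0.le hP0.le
  rcases le_or_gt t 1 with h1 | h1
  · have h2 : |Real.log t| = -Real.log t := abs_of_nonpos (Real.log_nonpos ht0.le h1)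
    have h3 : -Real.log t ≤ -Real.log ε := by
      have := Real.log_le_log hε ht
      linarith
    have h4 : -Real.log ε ≤ |Real.log ε| := neg_le_abs _
    linarith
  · have h2 : |Real.log t| = Real.log t := abs_of_nonneg (Real.log_nonneg h1.le)
    have h4 : 0 ≤ |Real.log ε| := abs_nonneg _
    rcases le_or_gt t P with h3 | h3
    · have := Real.log_le_log ht0 h3
      linarith
    · have h5 : Real.log t = Real.log P + Real.log (t / P) := by
        rw [Real.log_div ht0.ne' hP0.ne']; ring
      have h6 : Real.log (t / P) ≤ t / P := Real.log_le_self htP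
      linarith

/-- Bergman kernel logarithm convergence: if Q_p ≥ 0 are measurable with ∫ Q_p ≤ c·p and every
point has a neighborhood of finite measure on which Q_p is a.e. bounded below by a positive
constant for large p, then (1/p) log Q_p → 0 in L¹_loc. -/
theorem log_bergman_to_zero {Y : Type*} [TopologicalSpace Y] [MeasurableSpace Y]
    (μ : Measure Y) (Q : ℕ → Y → ENNReal) (c : ℝ) (hc : 0 < c)
    (hmeas : ∀ p, Measurable (Q p))
    (hint : ∀ p : ℕ, 1 ≤ p → ∫⁻ y, Q p y ∂μ ≤ ENNReal.ofReal (c * p))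
    (hloc : ∀ x : Y, ∃ U ∈ 𝓝 x, μ U < ⊤ ∧ ∃ ε : ℝ, 0 < ε ∧
      ∀ᶠ p in atTop, ∀ᵐ y ∂(μ.restrict U), ENNReal.ofReal ε ≤ Q p y) :
    ∀ x : Y, ∃ U ∈ 𝓝 x,
      Tendsto (fun p : ℕ => ∫ y in U, |Real.log ((Q p y).toReal)| / p ∂μ)
        atTop (𝓝 0) := by
  intro x
  obtain ⟨U, hU, hμU, ε, hε, hev⟩ := hloc x
  refine ⟨U, hU, ?_⟩
  haveI : IsFiniteMeasure (μ.restrict U) := ⟨by rwa [Measure.restrict_apply_univ]⟩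
  set a : ℝ := (μ U).toReal with ha
  have h0 : Tendsto (fun p : ℕ => a * |Real.log ε| * ((p:ℝ))⁻¹
      + 2 * a * (Real.log p / p) + c * ((p:ℝ))⁻¹) atTop (𝓝 0) := by
    have hinv : Tendsto (fun p : ℕ => ((p:ℝ))⁻¹) atTop (𝓝 0) :=
      tendsto_inv_atTop_zero.comp tendsto_natCast_atTop_atTop
    have hlog : Tendsto (fun p : ℕ => Real.log p / p) atTop (𝓝 0) := by
      have h := Real.tendsto_pow_log_div_mul_add_atTop 1 0 1 one_ne_zero
      simp only [pow_one, one_mul, add_zero] at h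
      exact h.comp tendsto_natCast_atTop_atTop
    have := ((hinv.const_mul (a * |Real.log ε|)).add (hlog.const_mul (2 * a))).add
      (hinv.const_mul c)
    simpa using this
  apply squeeze_zero' ?_ ?_ h0
  · filter_upwards with p
    exact integral_nonneg fun y => by positivity
  · filter_upwards [hev, eventually_ge_atTop 1] with p hp hp1
    have hpR : (1:ℝ) ≤ (p:ℝ) := by exact_mod_cast hp1
    have hpR0 : (0:ℝ) < (p:ℝ) := lt_of_lt_of_le one_pos hpR
    set P : ℝ := (p:ℝ)^2 with hPdef
    have hP : 1 ≤ P := one_le_pow₀ hpR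
    have hP0 : 0 < P := lt_of_lt_of_le one_pos hP
    have hlint : ∫⁻ y in U, Q p y ∂μ ≠ ⊤ := by
      have h1 : ∫⁻ y in U, Q p y ∂μ ≤ ∫⁻ y, Q p y ∂μ :=
        lintegral_mono' Measure.restrict_le_self le_rfl
      exact ((h1.trans (hint p hp1)).trans_lt ENNReal.ofReal_lt_top).ne
    have hfin : ∀ᵐ y ∂μ.restrict U, Q p y < ⊤ := ae_lt_top (hmeas p) hlint
    have hIQ : Integrable (fun y => (Q p y).toReal) (μ.restrict U) :=
      integrable_toReal_of_lintegral_ne_top (hmeas p).aemeasurable hlint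
    have hItop : ∫ y in U, (Q p y).toReal ∂μ ≤ c * p := by
      rw [integral_toReal (hmeas p).aemeasurable hfin]
      have h1 : ∫⁻ y in U, Q p y ∂μ ≤ ENNReal.ofReal (c * p) :=
        (lintegral_mono' Measure.restrict_le_self le_rfl).trans (hint p hp1)
      have h2 := ENNReal.toReal_mono ENNReal.ofReal_ne_top h1
      rwa [ENNReal.toReal_ofReal (by positivity)] at h2
    have hae : ∀ᵐ y ∂μ.restrict U,
        |Real.log ((Q p y).toReal)| ≤ |Real.log ε| + Real.log P + (Q p y).toReal / P := by
      filter_upwards [hp, hfin] with y hy hyfin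
      have ht : ε ≤ (Q p y).toReal := by
        have h1 := ENNReal.toReal_mono hyfin.ne hy
        rwa [ENNReal.toReal_ofReal hε.le] at h1
      exact abs_log_le_aux hε ht hP
    have hIb : Integrable (fun y => |Real.log ε| + Real.log P + (Q p y).toReal / P)
        (μ.restrict U) := (integrable_const _).add (hIQ.div_const P)
    have hIf : Integrable (fun y => |Real.log ((Q p y).toReal)|) (μ.restrict U) := by
      refine hIb.mono' ?_ ?_
      · exact ((Real.measurable_log.comp (hmeas p).ennreal_toReal).abs).aestronglyMeasurable
      · filter_upwards [hae] with y hy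
        simpa [Real.norm_eq_abs, _root_.abs_abs] using hy
    have hμUfin : μ U ≠ ⊤ := hμU.ne
    have ha0 : 0 ≤ a := ENNReal.toReal_nonneg
    have hA : ∫ y in U, |Real.log ((Q p y).toReal)| ∂μ
        ≤ a * (|Real.log ε| + Real.log P) + c * p / P := by
      calc ∫ y in U, |Real.log ((Q p y).toReal)| ∂μ
          ≤ ∫ y in U, (|Real.log ε| + Real.log P + (Q p y).toReal / P) ∂μ :=
            integral_mono_ae hIf hIb hae
        _ = a * (|Real.log ε| + Real.log P) + (∫ y in U, (Q p y).toReal ∂μ) / P := by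
            rw [integral_add (integrable_const _) (hIQ.div_const P), integral_div,
              setIntegral_const, smul_eq_mul]; rfl
        _ ≤ a * (|Real.log ε| + Real.log P) + c * p / P := by gcongr
    have hfld : ∫ y in U, |Real.log ((Q p y).toReal)| / p ∂μ
        = (∫ y in U, |Real.log ((Q p y).toReal)| ∂μ) / p := integral_div _ _
    rw [hfld]
    have hlogP : Real.log P = 2 * Real.log p := by
      rw [hPdef, Real.log_pow]; push_cast; ring
    have hstep : (∫ y in U, |Real.log ((Q p y).toReal)| ∂μ) / (p:ℝ)
        ≤ (a * (|Real.log ε| + 2 * Real.log p) + c * p / P) / p := by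
      rw [← hlogP]; gcongr
    refine hstep.trans ?_
    have hlogp : 0 ≤ Real.log p := Real.log_nonneg hpR
    have heq : (a * (|Real.log ε| + 2 * Real.log p) + c * p / P) / p
        = a * |Real.log ε| * ((p:ℝ))⁻¹ + 2 * a * (Real.log p / p) + c / P := by
      rw [hPdef]; field_simp
    rw [heq]
    have : c / P ≤ c * ((p:ℝ))⁻¹ := by
      rw [← div_eq_mul_inv]
      have hpP : (p:ℝ) ≤ P := by nlinarith
      gcongr
    linarith
end

section
/- Let d ≥ 1, p ≥ 1 be integers and let s be an entire function on ℂ such that ∫_{ℂ∖𝔻} |s(ζ)|² |ζ|^{-2d(p+1)} dλ(ζ) < +∞. Then s is a polynomial of degree at most dp + d - 2. -/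
open MeasureTheory Metric Complex Filter Topology

open scoped Real
open scoped Nat NNReal ENNReal

namespace EntireL2Aux

/-- Cauchy–Schwarz for a continuous nonnegative function on `Ioc 0 (2π)`. -/
lemma cauchy_schwarz (f : ℝ → ℝ) (hf : Continuous f) (h0 : ∀ x, 0 ≤ f x) :
    (∫ θ in Set.Ioc 0 (2 * π), f θ) ^ 2
      ≤ (2 * π) * ∫ θ in Set.Ioc 0 (2 * π), f θ ^ 2 := by
  set μ := volume.restrict (Set.Ioc (0:ℝ) (2 * π)) with hμ
  haveI : IsFiniteMeasure μ := by
    constructor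
    rw [hμ, Measure.restrict_apply_univ]
    exact measure_Ioc_lt_top
  have hmem : ∀ᵐ x ∂μ, x ∈ Set.Ioc (0:ℝ) (2 * π) := ae_restrict_mem measurableSet_Ioc
  obtain ⟨C, hC⟩ :=
    (isCompact_Icc (a := (0:ℝ)) (b := 2 * π)).exists_bound_of_continuousOn hf.continuousOn
  have hfm : MemLp f (ENNReal.ofReal 2) μ :=
    MemLp.of_bound hf.aestronglyMeasurable C <|
      hmem.mono fun x hx => hC x (Set.Ioc_subset_Icc_self hx)
  have hgm : MemLp (fun _ : ℝ => (1:ℝ)) (ENNReal.ofReal 2) μ := memLp_const 1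
  have hpq : Real.HolderConjugate 2 2 := .two_two
  have H := integral_mul_le_Lp_mul_Lq_of_nonneg hpq
    (Filter.Eventually.of_forall h0) (Filter.Eventually.of_forall fun _ => zero_le_one) hfm hgm
  have hrpow2 : ∀ x : ℝ, x ^ (2:ℝ) = x ^ 2 := by
    intro x
    rw [show (2:ℝ) = ((2:ℕ) : ℝ) by norm_num, Real.rpow_natCast]
  have hμuniv : (μ Set.univ).toReal = 2 * π := by
    rw [hμ, Measure.restrict_apply_univ, Real.volume_Ioc]
    rw [ENNReal.toReal_ofReal (sub_nonneg.mpr (by positivity))]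
    ring
  simp only [mul_one, Real.one_rpow, integral_const, smul_eq_mul, measureReal_def, hμuniv] at H
  simp_rw [hrpow2] at H
  have hI0 : 0 ≤ ∫ θ, f θ ∂μ := integral_nonneg h0
  have hI20 : 0 ≤ ∫ a, f a ^ 2 ∂μ := integral_nonneg fun x => sq_nonneg _
  have ha : ((∫ a, f a ^ 2 ∂μ) ^ (1/2:ℝ)) ^ 2 = ∫ a, f a ^ 2 ∂μ := by
    rw [← Real.rpow_natCast ((∫ a, f a ^ 2 ∂μ) ^ (1/2:ℝ)) 2, ← Real.rpow_mul hI20]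
    norm_num
  have hb : (((2:ℝ) * π) ^ (1/2:ℝ)) ^ 2 = 2 * π := by
    rw [← Real.rpow_natCast (((2:ℝ) * π) ^ (1/2:ℝ)) 2, ← Real.rpow_mul (by positivity : (0:ℝ) ≤ 2*π)]
    norm_num
  calc (∫ θ, f θ ∂μ) ^ 2
      ≤ ((∫ a, f a ^ 2 ∂μ) ^ (1/2:ℝ) * ((2:ℝ) * π) ^ (1/2:ℝ)) ^ 2 :=
        pow_le_pow_left₀ hI0 H 2
    _ = (2 * π) * ∫ a, f a ^ 2 ∂μ := by rw [mul_pow, ha, hb]; ring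

/-- The Cauchy-estimate + Cauchy–Schwarz bound on Taylor coefficients. -/
lemma coeff_sq_le (s : ℂ → ℂ) (hs : Differentiable ℂ s) {r : ℝ} (hr : 0 < r) (n : ℕ) :
    (‖iteratedDeriv n s 0‖ / (n ! : ℝ)) ^ 2 * (r ^ n) ^ 2
      ≤ (2 * π)⁻¹ * ∫ θ in Set.Ioc 0 (2 * π), ‖s (circleMap 0 r θ)‖ ^ 2 := by
  lift r to ℝ≥0 using hr.le with R hR
  have hR0 : (0:ℝ≥0) < R := by exact_mod_cast hr
  have hps : HasFPowerSeriesOnBall s (cauchyPowerSeries s 0 R) 0 R :=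
    (hs.differentiableOn).hasFPowerSeriesOnBall hR0
  set q := cauchyPowerSeries s 0 (R:ℝ) with hq
  set L := ∫ θ in (0:ℝ)..(2*π), ‖s (circleMap 0 (R:ℝ) θ)‖ with hL
  have hL0 : 0 ≤ L :=
    intervalIntegral.integral_nonneg (by positivity) (fun _ _ => norm_nonneg _)
  have h1 : ‖iteratedDeriv n s 0‖ = n ! * ‖q n fun _ => (1:ℂ)‖ := by
    rw [iteratedDeriv_eq_iteratedFDeriv, ← hps.factorial_smul (1:ℂ) n, nsmul_eq_mul,
      norm_mul, Complex.norm_natCast]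
  have h2 : ‖q n fun _ => (1:ℂ)‖ ≤ ‖q n‖ := by
    simpa using (q n).le_opNorm (fun _ => (1:ℂ))
  have h3 : ‖q n‖ ≤ ((2*π)⁻¹ * L) * ((R:ℝ)⁻¹) ^ n := by
    have := norm_cauchyPowerSeries_le s 0 (R:ℝ) n
    rwa [_root_.abs_of_nonneg R.coe_nonneg] at this
  have hfact : (0:ℝ) < (n ! : ℝ) := by exact_mod_cast Nat.factorial_pos n
  have hRne : (R:ℝ) ≠ 0 := ne_of_gt hr
  have hD : ‖iteratedDeriv n s 0‖ / (n ! : ℝ) * (R:ℝ) ^ n ≤ (2*π)⁻¹ * L := by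
    rw [h1, mul_comm ((n:ℕ)! : ℝ) _, mul_div_assoc, div_self hfact.ne', mul_one]
    calc ‖q n fun _ => (1:ℂ)‖ * (R:ℝ) ^ n
        ≤ ‖q n‖ * (R:ℝ) ^ n := by
          exact mul_le_mul_of_nonneg_right h2 (pow_nonneg hr.le n)
      _ ≤ ((2*π)⁻¹ * L) * ((R:ℝ)⁻¹) ^ n * (R:ℝ) ^ n := by
          exact mul_le_mul_of_nonneg_right h3 (pow_nonneg hr.le n)
      _ = (2*π)⁻¹ * L := by
          rw [mul_assoc, ← mul_pow, inv_mul_cancel₀ hRne, one_pow, mul_one]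
  have hcs : L ^ 2 ≤ (2*π) * ∫ θ in Set.Ioc 0 (2*π), ‖s (circleMap 0 (R:ℝ) θ)‖ ^ 2 := by
    have hLset : L = ∫ θ in Set.Ioc 0 (2*π), ‖s (circleMap 0 (R:ℝ) θ)‖ := by
      rw [hL, intervalIntegral.integral_of_le (by positivity : (0:ℝ) ≤ 2*π)]
    rw [hLset]
    exact cauchy_schwarz _ ((hs.continuous.comp (continuous_circleMap 0 (R:ℝ))).norm)
      (fun _ => norm_nonneg _)
  have hG0 : 0 ≤ ∫ θ in Set.Ioc 0 (2*π), ‖s (circleMap 0 (R:ℝ) θ)‖ ^ 2 :=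
    integral_nonneg fun x => sq_nonneg _
  have h2π : (2*π) ≠ 0 := by positivity
  calc (‖iteratedDeriv n s 0‖ / (n ! : ℝ)) ^ 2 * ((R:ℝ) ^ n) ^ 2
      = (‖iteratedDeriv n s 0‖ / (n ! : ℝ) * (R:ℝ) ^ n) ^ 2 := by rw [mul_pow]
    _ ≤ ((2*π)⁻¹ * L) ^ 2 := pow_le_pow_left₀ (by positivity) hD 2
    _ = (2*π)⁻¹ * (2*π)⁻¹ * L ^ 2 := by ring
    _ ≤ (2*π)⁻¹ * (2*π)⁻¹ * ((2*π) * ∫ θ in Set.Ioc 0 (2*π), ‖s (circleMap 0 (R:ℝ) θ)‖ ^ 2) := by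
        exact mul_le_mul_of_nonneg_left hcs (by positivity)
    _ = (2*π)⁻¹ * ∫ θ in Set.Ioc 0 (2*π), ‖s (circleMap 0 (R:ℝ) θ)‖ ^ 2 := by
        field_simp

set_option maxHeartbeats 1000000 in
lemma vanish (d p : ℕ) (hd : 1 ≤ d) (hp : 1 ≤ p) (s : ℂ → ℂ) (hs : Differentiable ℂ s)
    (hint : IntegrableOn
      (fun ζ : ℂ => ‖s ζ‖ ^ 2 * ‖ζ‖ ^ (-(2 * (d : ℤ) * ((p : ℤ) + 1))))
      (ball 0 1)ᶜ volume)
    (n : ℕ) (hn : d * p + d - 1 ≤ n) : iteratedDeriv n s 0 = 0 := by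
  have hdp : 1 ≤ d * p := by
    have := Nat.mul_le_mul hd hp; simpa using this
  by_contra hne
  set D := ‖iteratedDeriv n s 0‖ / (n ! : ℝ) with hD
  have hD0 : 0 < D :=
    div_pos (norm_pos_iff.mpr hne) (by exact_mod_cast Nat.factorial_pos n)
  set T := 2 * π * D ^ 2 with hT
  have hT0 : 0 < T := by positivity
  set F : ℂ → ℝ :=
    fun ζ => ‖s ζ‖ ^ 2 * ‖ζ‖ ^ (-(2 * (d : ℤ) * ((p : ℤ) + 1))) with hF
  have hzp : ∀ x : ℝ, x ^ (-(2 * (d : ℤ) * ((p : ℤ) + 1))) = (x ^ (2*(d*p+d)))⁻¹ := by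
    intro x
    rw [show -(2 * (d : ℤ) * ((p : ℤ) + 1)) = -((2*(d*p+d) : ℕ) : ℤ) by push_cast; ring,
      zpow_neg, zpow_natCast]
  -- transfer to ℝ × ℝ
  have hmp : MeasurePreserving (Complex.measurableEquivRealProd.symm) volume volume :=
    Complex.volume_preserving_equiv_real_prod.symm _
  have hB : IntegrableOn (fun x : ℝ × ℝ => F (Complex.measurableEquivRealProd.symm x))
      (Complex.measurableEquivRealProd.symm ⁻¹' (ball 0 1)ᶜ) volume := by
    have := (hmp.integrableOn_comp_preimage
      Complex.measurableEquivRealProd.symm.measurableEmbedding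
      (f := F) (s := (ball 0 1)ᶜ)).mpr hint
    simpa [Function.comp_def] using this
  -- polar coordinates
  set S : Set (ℝ × ℝ) := Set.Ioi (1:ℝ) ×ˢ Set.Ioo (-π) π with hS
  have hcm : ∀ q : ℝ × ℝ, Complex.measurableEquivRealProd.symm (polarCoord.symm q)
      = Complex.polarCoord.symm q := by
    intro q
    rw [Complex.polarCoord_symm_apply,
      show polarCoord.symm q = (q.1 * Real.cos q.2, q.1 * Real.sin q.2) from rfl]
    apply Complex.ext <;>
      simp [Complex.measurableEquivRealProd_symm_apply, ← Complex.ofReal_cos,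
        ← Complex.ofReal_sin]
  have hsub : polarCoord.symm '' S ⊆ Complex.measurableEquivRealProd.symm ⁻¹' (ball 0 1)ᶜ := by
    rintro x ⟨q, hq, rfl⟩
    obtain ⟨hq1, hq2⟩ := hq
    simp only [Set.mem_preimage, Set.mem_compl_iff, mem_ball, dist_zero_right]
    rw [hcm q, Complex.norm_polarCoord_symm]
    have h1 : (1:ℝ) < q.1 := hq1
    rw [abs_of_pos (lt_trans zero_lt_one h1)]
    linarith
  obtain ⟨G2, hG2⟩ : ∃ G2 : ℝ × ℝ → ℝ,
      G2 = fun x : ℝ × ℝ => F (Complex.measurableEquivRealProd.symm x) := ⟨_, rfl⟩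
  have hSint : IntegrableOn G2 (polarCoord.symm '' S) volume := by
    rw [hG2]; exact hB.mono_set hsub
  have hSm : MeasurableSet S := measurableSet_Ioi.prod measurableSet_Ioo
  set M : ℝ × ℝ → (ℝ × ℝ) →L[ℝ] (ℝ × ℝ) := fun q =>
    LinearMap.toContinuousLinearMap (Matrix.toLin (Module.Basis.finTwoProd ℝ) (Module.Basis.finTwoProd ℝ)
      !![Real.cos q.2, -q.1 * Real.sin q.2; Real.sin q.2, q.1 * Real.cos q.2]) with hM
  have hfd : ∀ q ∈ S, HasFDerivWithinAt polarCoord.symm (M q) S q := fun q _ =>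
    (hasFDerivAt_polarCoord_symm q).hasFDerivWithinAt
  have hdet : ∀ q : ℝ × ℝ, (M q).det = q.1 := by
    intro q
    conv_rhs => rw [← one_mul q.1, ← Real.cos_sq_add_sin_sq q.2]
    simp only [hM, neg_mul, LinearMap.det_toContinuousLinearMap, LinearMap.det_toLin,
      Matrix.det_fin_two_of, sub_neg_eq_add]
    ring
  have hinj : Set.InjOn polarCoord.symm S := by
    apply polarCoord.symm.injOn.mono
    rw [OpenPartialHomeomorph.symm_source]
    rintro ⟨r, θ⟩ ⟨h1, h2⟩
    exact ⟨show (0:ℝ) < r from lt_trans zero_lt_one h1, h2⟩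
  have hCoV : IntegrableOn
      (fun q : ℝ × ℝ => |(M q).det| • G2 (polarCoord.symm q)) S volume :=
    (integrableOn_image_iff_integrableOn_abs_det_fderiv_smul volume hSm hfd hinj _).mp hSint
  set f2 : ℝ × ℝ → ℝ := fun q => q.1 * F (Complex.polarCoord.symm q) with hf2
  have hCoV' : IntegrableOn f2 S volume := by
    refine hCoV.congr_fun ?_ hSm
    intro q hq
    have hq1 : (1:ℝ) < q.1 := (Set.mem_prod.mp hq).1
    show |(M q).det| • G2 (polarCoord.symm q) = q.1 * F (Complex.polarCoord.symm q)
    rw [hdet q, hG2]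
    simp only
    rw [hcm q, _root_.abs_of_pos (lt_trans zero_lt_one hq1), smul_eq_mul]
  rw [hS, IntegrableOn, Measure.volume_eq_prod, ← Measure.prod_restrict] at hCoV'
  have hH : Integrable (fun r : ℝ => ∫ θ in Set.Ioo (-π) π, f2 (r, θ))
      (volume.restrict (Set.Ioi (1:ℝ))) := hCoV'.integral_prod_left
  -- lower bound for the inner integral
  have hlow : ∀ r : ℝ, r ∈ Set.Ioi (1:ℝ) → T * r⁻¹ ≤ ∫ θ in Set.Ioo (-π) π, f2 (r, θ) := by
    intro r hr1
    have hr1' : (1:ℝ) < r := hr1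
    have hr0 : 0 < r := lt_trans zero_lt_one hr1'
    have hcirc : ∀ θ : ℝ, Complex.polarCoord.symm (r, θ) = circleMap 0 r θ := by
      intro θ
      rw [Complex.polarCoord_symm_apply]
      simp [circleMap, Complex.exp_mul_I]
    have hcalc : ∀ θ : ℝ, f2 (r, θ)
        = (r * (r ^ (2*(d*p+d)))⁻¹) * ‖s (circleMap 0 r θ)‖ ^ 2 := by
      intro θ
      show r * F (Complex.polarCoord.symm (r, θ)) = _
      rw [hcirc θ, hF]
      simp only
      rw [norm_circleMap_zero, abs_of_pos hr0, hzp]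
      ring
    have hint2 : ∫ θ in Set.Ioo (-π) π, f2 (r, θ)
        = (r * (r ^ (2*(d*p+d)))⁻¹) *
          ∫ θ in Set.Ioc 0 (2*π), ‖s (circleMap 0 r θ)‖ ^ 2 := by
      simp_rw [hcalc]
      rw [MeasureTheory.integral_const_mul]
      congr 1
      have hper : Function.Periodic (fun θ : ℝ => ‖s (circleMap 0 r θ)‖ ^ 2) (2*π) := by
        intro θ
        simp [periodic_circleMap 0 r θ]
      rw [← integral_Ioc_eq_integral_Ioo,
        ← intervalIntegral.integral_of_le (by linarith [Real.pi_pos] : (-π:ℝ) ≤ π)]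
      have hshift := hper.intervalIntegral_add_eq (-π) 0
      rw [show (-π) + 2*π = π from by ring, zero_add] at hshift
      rw [hshift, intervalIntegral.integral_of_le (by positivity : (0:ℝ) ≤ 2*π)]
    have hcoeff := coeff_sq_le s hs hr0 n
    rw [hint2]
    have hstep1 : (r * (r ^ (2*(d*p+d)))⁻¹) * (2*π * (D ^ 2 * (r ^ n) ^ 2))
        ≤ (r * (r ^ (2*(d*p+d)))⁻¹) *
          ∫ θ in Set.Ioc 0 (2*π), ‖s (circleMap 0 r θ)‖ ^ 2 := by
      refine mul_le_mul_of_nonneg_left ?_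
        (mul_nonneg hr0.le (inv_nonneg.mpr (pow_nonneg hr0.le _)))
      calc 2*π * (D ^ 2 * (r ^ n) ^ 2)
          ≤ 2*π * ((2*π)⁻¹ * ∫ θ in Set.Ioc 0 (2*π), ‖s (circleMap 0 r θ)‖ ^ 2) :=
            mul_le_mul_of_nonneg_left hcoeff (by positivity)
        _ = ∫ θ in Set.Ioc 0 (2*π), ‖s (circleMap 0 r θ)‖ ^ 2 := by
            rw [← mul_assoc, mul_inv_cancel₀ (by positivity : (2*π:ℝ) ≠ 0), one_mul]
    refine le_trans ?_ hstep1
    -- T * r⁻¹ ≤ (r * (r ^ (2*(d*p+d)))⁻¹) * (2*π * (D ^ 2 * (r ^ n) ^ 2))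
    have hpow : r ^ (2*(d*p+d)) ≤ r ^ (n*2+2) := by
      apply pow_le_pow_right₀ hr1'.le
      omega
    rw [hT]
    rw [show (r * (r ^ (2*(d*p+d)))⁻¹) * (2*π * (D ^ 2 * (r ^ n) ^ 2))
        = (2*π*D^2) * ((r ^ (n*2) * r) / r ^ (2*(d*p+d))) from by
      rw [div_eq_mul_inv]; ring]
    refine mul_le_mul_of_nonneg_left ?_ (by positivity)
    rw [inv_eq_one_div, div_le_div_iff₀ hr0 (pow_pos hr0 _)]
    calc 1 * r ^ (2*(d*p+d)) = r ^ (2*(d*p+d)) := one_mul _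
      _ ≤ r ^ (n*2+2) := hpow
      _ = r ^ (n*2) * r * r := by ring
  -- comparison
  have hcmp : Integrable (fun r : ℝ => T * r⁻¹) (volume.restrict (Set.Ioi (1:ℝ))) := by
    refine hH.mono' ((measurable_const.mul measurable_inv).aestronglyMeasurable) ?_
    filter_upwards [ae_restrict_mem measurableSet_Ioi] with r hr
    rw [Real.norm_eq_abs, _root_.abs_of_nonneg (mul_nonneg hT0.le
      (inv_nonneg.mpr (le_of_lt (lt_trans zero_lt_one hr))))]
    exact hlow r hr
  have hinv : IntegrableOn (fun r : ℝ => r⁻¹) (Set.Ioi (1:ℝ)) volume := by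
    have h2 := hcmp.const_mul T⁻¹
    simpa [IntegrableOn, ← mul_assoc, inv_mul_cancel₀ hT0.ne', one_mul] using h2
  have hrpow : IntegrableOn (fun x : ℝ => x ^ (-1:ℝ)) (Set.Ioi (1:ℝ)) volume := by
    refine hinv.congr_fun ?_ measurableSet_Ioi
    intro x hx
    exact (Real.rpow_neg_one x).symm
  rw [integrableOn_Ioi_rpow_iff zero_lt_one] at hrpow
  linarith

end EntireL2Aux

/-- An entire function with ∫_{ℂ∖𝔻} |s|²|ζ|^{-2d(p+1)} dλ < ∞ is a polynomial of
degree at most dp + d - 2. -/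
theorem entire_L2_growth (d p : ℕ) (hd : 1 ≤ d) (hp : 1 ≤ p) (s : ℂ → ℂ)
    (hs : Differentiable ℂ s)
    (hint : IntegrableOn
      (fun ζ : ℂ => ‖s ζ‖ ^ 2 * ‖ζ‖ ^ (-(2 * (d : ℤ) * ((p : ℤ) + 1))))
      (ball 0 1)ᶜ volume) :
    ∃ q : Polynomial ℂ, q.natDegree ≤ d * p + d - 2 ∧ ∀ ζ, s ζ = q.eval ζ := by
  have hdp : 1 ≤ d * p := by
    have := Nat.mul_le_mul hd hp; simpa using this
  have hvan : ∀ n, d * p + d - 1 ≤ n → iteratedDeriv n s 0 = 0 :=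
    EntireL2Aux.vanish d p hd hp s hs hint
  refine ⟨∑ k ∈ Finset.range (d * p + d - 1),
    Polynomial.C ((k ! : ℂ)⁻¹ * iteratedDeriv k s 0) * Polynomial.X ^ k, ?_, ?_⟩
  · apply Polynomial.natDegree_sum_le_of_forall_le
    intro i hi
    refine le_trans (Polynomial.natDegree_C_mul_X_pow_le _ _) ?_
    have := Finset.mem_range.mp hi
    omega
  · intro ζ
    have htaylor := Complex.taylorSeries_eq_of_entire' 0 ζ hs
    rw [← htaylor]
    rw [tsum_eq_sum (s := Finset.range (d * p + d - 1))
      (fun b hb => by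
        rw [hvan b (le_of_not_gt (fun hlt => hb (Finset.mem_range.mpr hlt)))]
        ring)]
    simp [Polynomial.eval_finset_sum]
end

section
/- Let P ∈ ℂ[ζ] be a polynomial of degree d ≥ 2. Then the pullback of the Fubini–Study form under the map ζ ↦ [1 : ζ : P(ζ)], namely σ*(ω) = (1/(2)) dd^c log(1 + |ζ|² + |P(ζ)|²), satisfies c₁/(1+|ζ|^{2d}) · (i/2) dζ∧dζ̄ ≤ σ*(ω) ≤ c₂/(1+|ζ|^{2d}) · (i/2) dζ∧dζ̄ on ℂ for some constants c₁, c₂ > 0. Equivalently, the density (1 + |P'(ζ)|² + |ζP'(ζ) − P(ζ)|²)/(π(1 + |ζ|² + |P(ζ)|²)²) is comparable to 1/(1+|ζ|^{2d}) on ℂ. -/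
open MeasureTheory Metric Complex Filter Topology

lemma tendsto_eval_div_pow (Q : Polynomial ℂ) (n : ℕ) (hn : Q.natDegree ≤ n) :
    Tendsto (fun z : ℂ => Q.eval z / z ^ n) (Bornology.cobounded ℂ) (𝓝 (Q.coeff n)) := by
  have hz : ∀ᶠ z : ℂ in Bornology.cobounded ℂ, z ≠ 0 := Bornology.eventually_ne_cobounded 0
  have heq : ∀ᶠ z : ℂ in Bornology.cobounded ℂ,
      (∑ i ∈ Finset.range (n + 1), Q.coeff i * (z⁻¹) ^ (n - i)) = Q.eval z / z ^ n := by
    filter_upwards [hz] with z hz0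
    rw [Polynomial.eval_eq_sum_range' (Nat.lt_succ_of_le hn), Finset.sum_div]
    refine Finset.sum_congr rfl fun i hi => ?_
    have hi' : i ≤ n := Nat.lt_succ_iff.mp (Finset.mem_range.mp hi)
    rw [mul_div_assoc, inv_pow]
    congr 1
    rw [eq_comm, inv_eq_one_div, div_eq_div_iff (pow_ne_zero _ hz0) (pow_ne_zero _ hz0),
      one_mul, ← pow_add, Nat.add_sub_cancel' hi']
  have hsum : Tendsto (fun z : ℂ => ∑ i ∈ Finset.range (n + 1), Q.coeff i * (z⁻¹) ^ (n - i))
      (Bornology.cobounded ℂ) (𝓝 (∑ i ∈ Finset.range (n + 1), Q.coeff i * (0 : ℂ) ^ (n - i))) := by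
    refine tendsto_finset_sum _ fun i _ => ?_
    exact tendsto_const_nhds.mul (Filter.tendsto_inv₀_cobounded.pow _)
  have hval : (∑ i ∈ Finset.range (n + 1), Q.coeff i * (0 : ℂ) ^ (n - i)) = Q.coeff n := by
    rw [Finset.sum_eq_single n]
    · simp
    · intro i hi hne
      have : 0 < n - i := Nat.sub_pos_of_lt (lt_of_le_of_ne (Nat.lt_succ_iff.mp
        (Finset.mem_range.mp hi)) hne)
      rw [zero_pow this.ne', mul_zero]
    · intro h; exact absurd (Finset.self_mem_range_succ n) h
  rw [← hval]
  exact hsum.congr' heq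

/-- The Fubini–Study pullback density (1+|P'|²+|ζP'−P|²)/(π(1+|ζ|²+|P|²)²) under
ζ ↦ [1:ζ:P(ζ)] is comparable to 1/(1+|ζ|^{2d}) when deg P = d ≥ 2. -/
theorem fs_pullback_comparable (d : ℕ) (hd : 2 ≤ d) (P : Polynomial ℂ)
    (hP : P.natDegree = d) :
    ∃ c₁ c₂ : ℝ, 0 < c₁ ∧ 0 < c₂ ∧ ∀ ζ : ℂ,
      c₁ / (1 + ‖ζ‖ ^ (2 * d)) ≤
        (1 + ‖P.derivative.eval ζ‖ ^ 2 +
            ‖ζ * P.derivative.eval ζ - P.eval ζ‖ ^ 2) /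
          (Real.pi * (1 + ‖ζ‖ ^ 2 + ‖P.eval ζ‖ ^ 2) ^ 2) ∧
      (1 + ‖P.derivative.eval ζ‖ ^ 2 +
            ‖ζ * P.derivative.eval ζ - P.eval ζ‖ ^ 2) /
          (Real.pi * (1 + ‖ζ‖ ^ 2 + ‖P.eval ζ‖ ^ 2) ^ 2)
        ≤ c₂ / (1 + ‖ζ‖ ^ (2 * d)) := by
  have hP0 : P ≠ 0 := by
    intro h
    rw [h, Polynomial.natDegree_zero] at hP
    omega
  set a : ℂ := P.coeff d with ha_def
  have ha0 : a ≠ 0 := by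
    rw [ha_def, ← hP, ← Polynomial.leadingCoeff]
    exact Polynomial.leadingCoeff_ne_zero.mpr hP0
  -- limits of the rescaled quantities
  have hA : Tendsto (fun z : ℂ => P.eval z / z ^ d) (Bornology.cobounded ℂ) (𝓝 a) :=
    tendsto_eval_div_pow P d hP.le
  have hB : Tendsto (fun z : ℂ => P.derivative.eval z / z ^ d) (Bornology.cobounded ℂ)
      (𝓝 0) := by
    have hdeg : P.derivative.natDegree ≤ d := le_trans (Polynomial.natDegree_derivative_le P)
      (by omega)
    have hc : P.derivative.coeff d = 0 := by
      apply Polynomial.coeff_eq_zero_of_natDegree_lt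
      exact lt_of_le_of_lt (le_trans (Polynomial.natDegree_derivative_le P) (by omega))
        (by omega : d - 1 < d)
    simpa [hc] using tendsto_eval_div_pow P.derivative d hdeg
  have hone : Tendsto (fun z : ℂ => 1 / z ^ d) (Bornology.cobounded ℂ) (𝓝 0) := by
    have := tendsto_eval_div_pow (1 : Polynomial ℂ) d (by simp)
    have h0 : (1 : Polynomial ℂ).coeff d = 0 := by
      rw [Polynomial.coeff_one, if_neg (by omega : ¬ d = 0)]
    rw [h0] at this
    simpa using this
  have hX : Tendsto (fun z : ℂ => z / z ^ d) (Bornology.cobounded ℂ) (𝓝 0) := by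
    have := tendsto_eval_div_pow (Polynomial.X : Polynomial ℂ) d
      (by rw [Polynomial.natDegree_X]; omega)
    have h0 : (Polynomial.X : Polynomial ℂ).coeff d = 0 := by
      rw [Polynomial.coeff_X, if_neg (by omega : ¬ 1 = d)]
    rw [h0] at this
    simpa using this
  have hQ : Tendsto (fun z : ℂ => (z * P.derivative.eval z - P.eval z) / z ^ d)
      (Bornology.cobounded ℂ) (𝓝 (((d : ℂ) - 1) * a)) := by
    set Q : Polynomial ℂ := Polynomial.X * P.derivative - P with hQ_def
    have hdeg : Q.natDegree ≤ d := by
      refine le_trans (Polynomial.natDegree_sub_le _ _) (max_le ?_ hP.le)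
      refine le_trans (Polynomial.natDegree_mul_le) ?_
      have := Polynomial.natDegree_derivative_le P
      rw [Polynomial.natDegree_X]
      omega
    have hc : Q.coeff d = ((d : ℂ) - 1) * a := by
      have hd1 : d - 1 + 1 = d := by omega
      rw [hQ_def, Polynomial.coeff_sub, ← hd1, Polynomial.coeff_X_mul,
        Polynomial.coeff_derivative, hd1]
      rw [Nat.cast_sub (by omega : 1 ≤ d)]
      push_cast
      ring
    have := tendsto_eval_div_pow Q d hdeg
    rw [hc] at this
    refine this.congr fun z => ?_
    simp [hQ_def]
  -- the auxiliary function F and its limit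
  set F : ℂ → ℝ := fun z =>
    ((‖1 / z ^ d‖) ^ 2 + (‖P.derivative.eval z / z ^ d‖) ^ 2 +
        (‖(z * P.derivative.eval z - P.eval z) / z ^ d‖) ^ 2) *
      ((‖1 / z ^ d‖) ^ 2 + 1) /
      (Real.pi * ((‖1 / z ^ d‖) ^ 2 + (‖z / z ^ d‖) ^ 2 +
        (‖P.eval z / z ^ d‖) ^ 2) ^ 2) with hF_def
  set L : ℝ := (‖((d : ℂ) - 1) * a‖) ^ 2 * (0 + 1) /
      (Real.pi * ((‖a‖) ^ 2) ^ 2) with hL_def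
  have habs : ∀ (l : ℂ) (f : ℂ → ℂ), Tendsto f (Bornology.cobounded ℂ) (𝓝 l) →
      Tendsto (fun z => (‖f z‖) ^ 2) (Bornology.cobounded ℂ)
        (𝓝 ((‖l‖) ^ 2)) := fun l f hf =>
    ((continuous_norm.tendsto l).comp hf).pow 2
  have hF : Tendsto F (Bornology.cobounded ℂ) (𝓝 L) := by
    rw [hF_def, hL_def]
    have h1 := habs _ _ hone
    have h2 := habs _ _ hB
    have h3 := habs _ _ hQ
    have h4 := habs _ _ hX
    have h5 := habs _ _ hA
    simp only [norm_zero] at h1 h2 h4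
    have hzero : ((0 : ℝ)) ^ 2 = 0 := by norm_num
    have hnum : Tendsto (fun z : ℂ =>
        ((‖1 / z ^ d‖) ^ 2 + (‖P.derivative.eval z / z ^ d‖) ^ 2 +
          (‖(z * P.derivative.eval z - P.eval z) / z ^ d‖) ^ 2) *
        ((‖1 / z ^ d‖) ^ 2 + 1)) (Bornology.cobounded ℂ)
        (𝓝 ((‖((d : ℂ) - 1) * a‖) ^ 2 * (0 + 1))) := by
      have := ((h1.add h2).add h3).mul (h1.add (tendsto_const_nhds (x := (1 : ℝ))))
      simpa using this
    have hden : Tendsto (fun z : ℂ =>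
        Real.pi * ((‖1 / z ^ d‖) ^ 2 + (‖z / z ^ d‖) ^ 2 +
          (‖P.eval z / z ^ d‖) ^ 2) ^ 2) (Bornology.cobounded ℂ)
        (𝓝 (Real.pi * ((‖a‖) ^ 2) ^ 2)) := by
      have := (tendsto_const_nhds (x := Real.pi)).mul (((h1.add h4).add h5).pow 2)
      simpa using this
    refine hnum.div hden ?_
    have : ‖a‖ ≠ 0 := by simpa using ha0
    positivity
  set G : ℂ → ℝ := fun z =>
    (1 + ‖P.derivative.eval z‖ ^ 2 +
        ‖z * P.derivative.eval z - P.eval z‖ ^ 2) *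
      (1 + ‖z‖ ^ (2 * d)) /
      (Real.pi * (1 + ‖z‖ ^ 2 + ‖P.eval z‖ ^ 2) ^ 2) with hG_def
  have hGF : ∀ᶠ z : ℂ in Bornology.cobounded ℂ, F z = G z := by
    filter_upwards [Bornology.eventually_ne_cobounded 0] with z hz0
    have ht0 : (0 : ℝ) < ‖z‖ := by
      simpa [norm_pos_iff] using hz0
    have hs0 : (0 : ℝ) < ‖z‖ ^ (2 * d) := by positivity
    have key : ∀ x : ℂ, (‖x / z ^ d‖) ^ 2 =
        (‖x‖) ^ 2 / ‖z‖ ^ (2 * d) := by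
      intro x
      rw [norm_div, norm_pow, div_pow, ← pow_mul, mul_comm d 2]
    rw [hF_def, hG_def]
    simp only [key, norm_one]
    have hden0 : (0 : ℝ) < 1 + ‖z‖ ^ 2 + ‖P.eval z‖ ^ 2 := by positivity
    field_simp
  have hG : Tendsto G (Bornology.cobounded ℂ) (𝓝 L) := hF.congr' hGF
  have hL : 0 < L := by
    have hd1 : ((d : ℂ) - 1) ≠ 0 := by
      rw [sub_ne_zero]
      exact_mod_cast (by omega : (d : ℕ) ≠ 1) ∘ fun h => Nat.cast_injective h
    have hda : ((d : ℂ) - 1) * a ≠ 0 := mul_ne_zero hd1 ha0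
    have h1 : (0 : ℝ) < ‖((d : ℂ) - 1) * a‖ := norm_pos_iff.mpr hda
    have h2 : (0 : ℝ) < ‖a‖ := norm_pos_iff.mpr ha0
    rw [hL_def]
    positivity
  have hGpos : ∀ z : ℂ, 0 < G z := by
    intro z
    rw [hG_def]
    positivity
  -- eventual two-sided bound outside a compact set
  have hev : ∀ᶠ z : ℂ in Bornology.cobounded ℂ, L / 2 ≤ G z ∧ G z ≤ 2 * L :=
    (hG.eventually_const_le (by linarith)).and (hG.eventually_le_const (by linarith))
  have hbdd : Bornology.IsBounded {z : ℂ | L / 2 ≤ G z ∧ G z ≤ 2 * L}ᶜ := by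
    have : Bornology.IsCobounded {z : ℂ | L / 2 ≤ G z ∧ G z ≤ 2 * L} := hev
    exact this.compl
  obtain ⟨R, hR⟩ := hbdd.subset_closedBall 0
  set R' : ℝ := max R 0 with hR'_def
  have hKne : (Metric.closedBall (0 : ℂ) R').Nonempty :=
    ⟨0, Metric.mem_closedBall_self (le_max_right _ _)⟩
  have hGcont : Continuous G := by
    rw [hG_def]
    apply Continuous.div
    · exact ((continuous_const.add
        ((continuous_norm.comp P.derivative.continuous).pow 2)).add
        ((continuous_norm.comp
          ((continuous_id.mul P.derivative.continuous).sub P.continuous)).pow 2)).mul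
        (continuous_const.add (continuous_norm.pow (2 * d)))
    · exact continuous_const.mul (((continuous_const.add (continuous_norm.pow 2)).add
        ((continuous_norm.comp P.continuous).pow 2)).pow 2)
    · intro z
      positivity
  obtain ⟨zmin, _, hmin⟩ := (isCompact_closedBall (0 : ℂ) R').exists_isMinOn hKne
    hGcont.continuousOn
  obtain ⟨zmax, _, hmax⟩ := (isCompact_closedBall (0 : ℂ) R').exists_isMaxOn hKne
    hGcont.continuousOn
  refine ⟨min (L / 2) (G zmin), max (2 * L) (G zmax),
    lt_min (by linarith) (hGpos zmin), lt_max_of_lt_left (by linarith), fun ζ => ?_⟩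
  have hbound : min (L / 2) (G zmin) ≤ G ζ ∧ G ζ ≤ max (2 * L) (G zmax) := by
    by_cases hζ : ζ ∈ Metric.closedBall (0 : ℂ) R'
    · exact ⟨le_trans (min_le_right _ _) (hmin hζ),
        le_trans (hmax hζ) (le_max_right _ _)⟩
    · have hζ' : ζ ∉ {z : ℂ | L / 2 ≤ G z ∧ G z ≤ 2 * L}ᶜ := by
        intro hmem
        exact hζ (Metric.closedBall_subset_closedBall (le_max_left _ _) (hR hmem))
      have h2 : L / 2 ≤ G ζ ∧ G ζ ≤ 2 * L := not_not.mp hζ'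
      exact ⟨le_trans (min_le_left _ _) h2.1, le_trans h2.2 (le_max_left _ _)⟩
  have hs : (0 : ℝ) < 1 + ‖ζ‖ ^ (2 * d) := by positivity
  have hGval : (1 + ‖P.derivative.eval ζ‖ ^ 2 +
        ‖ζ * P.derivative.eval ζ - P.eval ζ‖ ^ 2) /
      (Real.pi * (1 + ‖ζ‖ ^ 2 + ‖P.eval ζ‖ ^ 2) ^ 2) *
      (1 + ‖ζ‖ ^ (2 * d)) = G ζ := by
    rw [hG_def]
    rw [div_mul_eq_mul_div]
  constructor
  · rw [div_le_iff₀ hs, hGval]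
    exact hbound.1
  · rw [le_div_iff₀ hs, hGval]
    exact hbound.2
end
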